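/- Let R be a commutative ring and A, B, C, D be m×m matrices over R such that AD = DA and BD = DB. Then the determinant of the block matrix [[A, B], [C, D]] equals det(AD − BC). -/
import Mathlib

open Matrix Polynomial

private lemma aux_detD_mul {S : Type*} [CommRing S] {m : ℕ}
    (A B C D : Matrix (Fin m) (Fin m) S) (h1 : A * D = D * A) (h2 : B * D = D * B) :
    D.det * (Matrix.fromBlocks A B C D).det = (A * D - B * C).det * D.det := by
  have key : fromBlocks D (-B) 0 1 * fromBlocks A B C D
      = fromBlocks (D * A - B * C) 0 C D := by
    rw [fromBlocks_multiply]
    simp [Matrix.neg_mul, h2, sub_eq_add_neg]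
  have := congrArg Matrix.det key
  rw [det_mul, det_fromBlocks_zero₂₁, det_fromBlocks_zero₁₂, det_one, mul_one] at this
  rw [this, ← h1]

theorem det_fromBlocks_of_comm_AD_BD {R : Type*} [CommRing R] {m : ℕ}
    (A B C D : Matrix (Fin m) (Fin m) R) (h1 : A * D = D * A) (h2 : B * D = D * B) :
    (Matrix.fromBlocks A B C D).det = (A * D - B * C).det := by
  let f : R →+* R[X] := Polynomial.C
  set A' := A.map f with hA'
  set B' := B.map f with hB'
  set C' := C.map f with hC'
  set D' := (X : R[X]) • (1 : Matrix (Fin m) (Fin m) R[X]) + D.map f with hD'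
  have hmap_mul : ∀ M N : Matrix (Fin m) (Fin m) R,
      (M * N).map f = M.map f * N.map f := fun M N => (f.mapMatrix.map_mul M N).symm ▸ rfl
  have hcomm1 : A' * D' = D' * A' := by
    rw [hD', Matrix.mul_add, Matrix.add_mul, mul_smul_one, smul_one_mul,
      ← hmap_mul, ← hmap_mul, h1]
  have hcomm2 : B' * D' = D' * B' := by
    rw [hD', Matrix.mul_add, Matrix.add_mul, mul_smul_one, smul_one_mul,
      ← hmap_mul, ← hmap_mul, h2]
  -- det D' is monic, hence regular
  have hmonic : (D'.det).Monic := by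
    have : D' = (-D).charmatrix := by
      ext i j
      by_cases h : i = j <;>
        simp [hD', charmatrix_apply, Matrix.one_apply, h, f, sub_eq_add_neg]
    rw [this]
    exact (-D).charpoly_monic
  have hkey := aux_detD_mul A' B' C' D' hcomm1 hcomm2
  have hcancel : (Matrix.fromBlocks A' B' C' D').det = (A' * D' - B' * C').det := by
    apply hmonic.isRegular.left
    show D'.det * _ = D'.det * _
    rw [hkey, mul_comm]
  -- evaluate at 0
  have := congrArg (Polynomial.evalRingHom (0 : R)) hcancel
  rw [RingHom.map_det, RingHom.map_det] at this
  rw [map_sub, _root_.map_mul, _root_.map_mul] at this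
  simp only [RingHom.mapMatrix_apply] at this
  have hev : ∀ M : Matrix (Fin m) (Fin m) R,
      (M.map f).map (Polynomial.evalRingHom (0 : R)) = M := by
    intro M; ext i j; simp [f]
  have hevD : D'.map (Polynomial.evalRingHom (0 : R)) = D := by
    ext i j
    by_cases h : i = j <;> simp [hD', Matrix.one_apply, h, f]
  rw [Matrix.fromBlocks_map, hev A, hev B, hev C, hevD] at this
  exact this
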